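/- Gumbel-max trick: if u₁, …, u_n are independent uniform random variables on (0,1), g_i = −log(−log u_i), and p₁, …, p_n are positive reals, then the probability that index k maximizes log(p_i) + g_i equals p_k / (p₁ + ⋯ + p_n). -/

import Mathlib

open MeasureTheory ProbabilityTheory
open scoped BigOperators

lemma gumbel_cond_iff {pi pk a b : ℝ} (hpi : 0 < pi) (hpk : 0 < pk)
    (ha : a ∈ Set.Ioo (0:ℝ) 1) (hb : b ∈ Set.Ioo (0:ℝ) 1) :
    Real.log pi + (-Real.log (-Real.log a)) < Real.log pk + (-Real.log (-Real.log b)) ↔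
      a < b ^ (pi / pk) := by
  have hA : 0 < -Real.log a := by have := Real.log_neg ha.1 ha.2; linarith
  have hB : 0 < -Real.log b := by have := Real.log_neg hb.1 hb.2; linarith
  rw [← sub_eq_add_neg, ← sub_eq_add_neg, ← Real.log_div hpi.ne' hA.ne',
    ← Real.log_div hpk.ne' hB.ne', Real.log_lt_log_iff (by positivity) (by positivity),
    div_lt_div_iff₀ hA hB,
    show (a < b ^ (pi / pk)) ↔ Real.log a < Real.log (b ^ (pi / pk)) from
      (Real.log_lt_log_iff ha.1 (Real.rpow_pos_of_pos hb.1 _)).symm,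
    Real.log_rpow hb.1]
  rw [div_mul_eq_mul_div, lt_div_iff₀ hpk]
  constructor <;> intro h <;> nlinarith

lemma map_eq_pi {Ω : Type*} [MeasurableSpace Ω] (P : Measure Ω)
    [IsProbabilityMeasure P] (n : ℕ) (u : Fin n → Ω → ℝ)
    (hmeas : ∀ i, Measurable (u i))
    (hlaw : ∀ i, Measure.map (u i) P = (volume.restrict (Set.Ioo (0:ℝ) 1)))
    (hindep : iIndepFun u P) :
    Measure.map (fun ω i => u i ω) P
      = Measure.pi (fun _ : Fin n => volume.restrict (Set.Ioo (0:ℝ) 1)) := by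
  have hf : Measurable (fun ω (i : Fin n) => u i ω) := measurable_pi_lambda _ hmeas
  have : IsProbabilityMeasure (volume.restrict (Set.Ioo (0:ℝ) 1)) := by
    constructor
    rw [Measure.restrict_apply_univ, Real.volume_Ioo]
    norm_num
  refine (Measure.pi_eq (μ := fun _ : Fin n => volume.restrict (Set.Ioo (0:ℝ) 1)) fun s hs => ?_).symm
  rw [Measure.map_apply hf (MeasurableSet.univ_pi hs)]
  have hpre : (fun ω i => u i ω) ⁻¹' Set.pi Set.univ s = ⋂ i ∈ Finset.univ, u i ⁻¹' s i := by
    ext ω; simp [Set.mem_pi]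
  rw [hpre, hindep.measure_inter_preimage_eq_mul Finset.univ (fun i _ => hs i)]
  exact Finset.prod_congr rfl fun i _ => by
    rw [← hlaw i, Measure.map_apply (hmeas i) (hs i)]

/-- Gumbel-max trick: with i.i.d. Uniform(0,1) variables u_i, Gumbel noises
    g_i = −log(−log u_i), and positive weights p_i, the probability that index k
    strictly maximizes log p_i + g_i equals p k / ∑ i, p i. -/
theorem gumbel_max_trick {Ω : Type*} [MeasurableSpace Ω] (P : Measure Ω)
    [IsProbabilityMeasure P] (n : ℕ) (u : Fin n → Ω → ℝ)
    (hmeas : ∀ i, Measurable (u i))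
    (hlaw : ∀ i, Measure.map (u i) P = (volume.restrict (Set.Ioo (0:ℝ) 1)))
    (hindep : iIndepFun u P)
    (p : Fin n → ℝ) (hp : ∀ i, 0 < p i) (k : Fin n) :
    P {ω | ∀ i, i ≠ k →
        Real.log (p i) + (-Real.log (-Real.log (u i ω)))
          < Real.log (p k) + (-Real.log (-Real.log (u k ω)))}
      = ENNReal.ofReal (p k / ∑ i, p i) := by
  classical
  cases n with
  | zero => exact k.elim0
  | succ m =>
  set μ : Measure ℝ := volume.restrict (Set.Ioo (0:ℝ) 1) with hμdef
  haveI hμprob : IsProbabilityMeasure μ := by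
    constructor
    rw [hμdef, Measure.restrict_apply_univ, Real.volume_Ioo]
    norm_num
  have hμIoo : μ (Set.Ioo (0:ℝ) 1) = 1 := by
    rw [hμdef, Measure.restrict_apply measurableSet_Ioo, Set.inter_self, Real.volume_Ioo]
    norm_num
  have hf : Measurable (fun ω (i : Fin (m+1)) => u i ω) := measurable_pi_lambda _ hmeas
  -- the event as a preimage
  set T : Set (Fin (m+1) → ℝ) := {x | ∀ i, i ≠ k →
      Real.log (p i) + (-Real.log (-Real.log (x i)))
        < Real.log (p k) + (-Real.log (-Real.log (x k)))} with hTdef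
  have hTmeas : MeasurableSet T := by
    have : T = ⋂ i, ⋂ (_ : i ≠ k), {x : Fin (m+1) → ℝ |
        Real.log (p i) + (-Real.log (-Real.log (x i)))
          < Real.log (p k) + (-Real.log (-Real.log (x k)))} := by
      ext x; simp [hTdef]
    rw [this]
    refine MeasurableSet.iInter fun i => MeasurableSet.iInter fun _ => ?_
    apply measurableSet_lt
    · exact ((Real.measurable_log.comp
        ((Real.measurable_log.comp (measurable_pi_apply i)).neg)).neg).const_add _
    · exact ((Real.measurable_log.comp
        ((Real.measurable_log.comp (measurable_pi_apply k)).neg)).neg).const_add _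
  have hPT : P {ω | ∀ i, i ≠ k →
      Real.log (p i) + (-Real.log (-Real.log (u i ω)))
        < Real.log (p k) + (-Real.log (-Real.log (u k ω)))}
      = (Measure.pi fun _ : Fin (m+1) => μ) T := by
    rw [← map_eq_pi P (m+1) u hmeas hlaw hindep, Measure.map_apply hf hTmeas]
    rfl
  rw [hPT]
  -- a.e. all coordinates in Ioo 0 1
  have hae : ∀ᵐ x ∂(Measure.pi fun _ : Fin (m+1) => μ), ∀ i, x i ∈ Set.Ioo (0:ℝ) 1 := by
    have h1 : (Measure.pi fun _ : Fin (m+1) => μ)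
        (Set.pi Set.univ fun _ => Set.Ioo (0:ℝ) 1) = 1 := by
      rw [Measure.pi_pi]
      simp [hμIoo]
    have h2 : (Measure.pi fun _ : Fin (m+1) => μ)
        ((Set.pi Set.univ fun _ => Set.Ioo (0:ℝ) 1)ᶜ) = 0 := by
      rw [measure_compl (MeasurableSet.univ_pi fun _ => measurableSet_Ioo)
        (measure_ne_top _ _), h1, measure_univ, tsub_self]
    refine (MeasureTheory.ae_iff).2 ?_
    refine measure_mono_null (fun x hx => ?_) h2
    simp only [Set.mem_compl_iff, Set.mem_pi, Set.mem_univ, forall_true_left] at *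
    intro hall
    exact hx fun i => hall i
  -- replace T with the rpow description
  set c : Fin (m+1) → ℝ := fun i => p i / p k with hcdef
  set T' : Set (Fin (m+1) → ℝ) :=
    {x | ∀ j : Fin m, x (k.succAbove j) < x k ^ c (k.succAbove j)} with hT'def
  have hTT' : (Measure.pi fun _ : Fin (m+1) => μ) T
      = (Measure.pi fun _ : Fin (m+1) => μ) T' := by
    refine measure_congr ?_
    rw [Filter.eventuallyEq_set]
    filter_upwards [hae] with x hx
    simp only [hTdef, hT'def, Set.mem_setOf_eq]
    constructor
    · intro h j
      exact (gumbel_cond_iff (hp _) (hp k) (hx _) (hx k)).1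
        (h _ (Fin.succAbove_ne k j))
    · intro h i hik
      obtain ⟨j, rfl⟩ := Fin.exists_succAbove_eq hik
      exact (gumbel_cond_iff (hp _) (hp k) (hx _) (hx k)).2 (h j)
  rw [hTT']
  -- split off coordinate k via the measurable equivalence
  set ν : Measure (Fin m → ℝ) := Measure.pi fun _ => μ with hνdef
  set S : Set (ℝ × (Fin m → ℝ)) :=
    {q | ∀ j : Fin m, q.2 j < q.1 ^ c (k.succAbove j)} with hSdef
  have hSmeas : MeasurableSet S := by
    have : S = ⋂ j : Fin m,
        {q : ℝ × (Fin m → ℝ) | q.2 j < q.1 ^ c (k.succAbove j)} := by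
      ext q; simp [hSdef]
    rw [this]
    exact MeasurableSet.iInter fun j => measurableSet_lt (by fun_prop) (by measurability)
  have hprev : T' =
      (MeasurableEquiv.piFinSuccAbove (fun _ : Fin (m+1) => ℝ) k) ⁻¹' S := by
    ext x
    simp [hT'def, hSdef, MeasurableEquiv.piFinSuccAbove_apply, Fin.insertNthEquiv_symm_apply, Fin.removeNth]
  have hsplit : (Measure.pi fun _ : Fin (m+1) => μ) T' = (μ.prod ν) S := by
    rw [hprev]
    exact (measurePreserving_piFinSuccAbove (fun _ : Fin (m+1) => μ) k).measure_preimage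
      hSmeas.nullMeasurableSet
  rw [hsplit, Measure.prod_apply hSmeas]
  set s0 : ℝ := ∑ j : Fin m, c (k.succAbove j) with hs0def
  have hs0 : 0 ≤ s0 := Finset.sum_nonneg fun j _ => le_of_lt (div_pos (hp _) (hp k))
  have hslice : ∀ t ∈ Set.Ioo (0:ℝ) 1,
      ν (Prod.mk t ⁻¹' S) = ENNReal.ofReal (t ^ s0) := by
    intro t ht
    have h1 : Prod.mk t ⁻¹' S
        = Set.pi Set.univ fun j : Fin m => Set.Iio (t ^ c (k.succAbove j)) := by
      ext y; simp [hSdef]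
    rw [h1, hνdef, Measure.pi_pi]
    have h2 : ∀ j : Fin m, μ (Set.Iio (t ^ c (k.succAbove j)))
        = ENNReal.ofReal (t ^ c (k.succAbove j)) := by
      intro j
      have hc : 0 < c (k.succAbove j) := div_pos (hp _) (hp k)
      have htc1 : t ^ c (k.succAbove j) ≤ 1 :=
        le_of_lt (Real.rpow_lt_one (le_of_lt ht.1) ht.2 hc)
      rw [hμdef, Measure.restrict_apply measurableSet_Iio]
      have heq : Set.Iio (t ^ c (k.succAbove j)) ∩ Set.Ioo 0 1
          = Set.Ioo 0 (t ^ c (k.succAbove j)) := by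
        ext y
        simp only [Set.mem_inter_iff, Set.mem_Iio, Set.mem_Ioo]
        constructor
        · rintro ⟨hy1, hy2, hy3⟩; exact ⟨hy2, hy1⟩
        · rintro ⟨hy1, hy2⟩; exact ⟨hy2, hy1, lt_of_lt_of_le hy2 htc1⟩
      rw [heq, Real.volume_Ioo, sub_zero]
    calc (∏ j : Fin m, μ (Set.Iio (t ^ c (k.succAbove j))))
        = ∏ j : Fin m, ENNReal.ofReal (t ^ c (k.succAbove j)) :=
          Finset.prod_congr rfl fun j _ => h2 j
      _ = ENNReal.ofReal (∏ j : Fin m, t ^ c (k.succAbove j)) :=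
          (ENNReal.ofReal_prod_of_nonneg fun j _ =>
            le_of_lt (Real.rpow_pos_of_pos ht.1 _)).symm
      _ = ENNReal.ofReal (t ^ s0) := by
          rw [hs0def, Real.rpow_sum_of_pos ht.1]
  have hlint : ∫⁻ t, ν (Prod.mk t ⁻¹' S) ∂μ
      = ∫⁻ t in Set.Ioo (0:ℝ) 1, ENNReal.ofReal (t ^ s0) ∂volume := by
    rw [hμdef]
    exact setLIntegral_congr_fun measurableSet_Ioo hslice
  rw [hlint]
  have hInt : IntegrableOn (fun t : ℝ => t ^ s0) (Set.Ioo (0:ℝ) 1) := by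
    have h := intervalIntegral.intervalIntegrable_rpow' (a := 0) (b := 1) (by linarith : (-1:ℝ) < s0)
    rw [intervalIntegrable_iff] at h
    refine h.mono_set ?_
    rw [Set.uIoc_of_le (by norm_num : (0:ℝ) ≤ 1)]
    exact Set.Ioo_subset_Ioc_self
  rw [← ofReal_integral_eq_lintegral_ofReal hInt ?_]
  · congr 1
    rw [← MeasureTheory.integral_Ioc_eq_integral_Ioo,
      ← intervalIntegral.integral_of_le (by norm_num : (0:ℝ) ≤ 1),
      integral_rpow (Or.inl (by linarith)), Real.one_rpow,
      Real.zero_rpow (by linarith : s0 + 1 ≠ 0), sub_zero]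
    have hsum : 0 < ∑ i, p i := Finset.sum_pos (fun i _ => hp i) ⟨k, Finset.mem_univ k⟩
    have hkey : s0 + 1 = (∑ i, p i) / p k := by
      rw [Fin.sum_univ_succAbove p k, hs0def]
      show (∑ j : Fin m, p (k.succAbove j) / p k) + 1
          = (p k + ∑ i : Fin m, p (k.succAbove i)) / p k
      rw [← Finset.sum_div, eq_div_iff (hp k).ne', add_mul,
        div_mul_cancel₀ _ (hp k).ne', one_mul]
      ring
    rw [hkey, one_div_div]
  · filter_upwards [ae_restrict_mem measurableSet_Ioo] with t ht
    exact Real.rpow_nonneg (le_of_lt ht.1) _
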